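/- For every k ≥ 1, let H_k be the graph on 6k+2 vertices a_1,...,a_{3k+1}, b_1,...,b_{3k+1} with edges forming the outer cycle a_1 a_2 ... a_{3k+1}, the inner cycle b_1 b_2 ... b_{3k+1}, and edges a_i b_i and b_i a_{i+1} for all i (indices mod 3k+1). Then every proper coloring c of H_k with colors in {1,2,3,4} such that all bounded faces (the 2(3k+1) triangles {a_i, b_i, a_{i+1}} and {b_i, a_{i+1}, b_{i+1}}, and the inner face {b_1,...,b_{3k+1}}) have the unique-maximum property must assign color 4 to some vertex a_i of the outer cycle. -/

import Mathlib

/-- The maximum of three values is attained at exactly one of them. -/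
def UM3 (x y z : ℕ) : Prop :=
  (y < x ∧ z < x) ∨ (x < y ∧ z < y) ∨ (x < z ∧ y < z)

open Fin.NatCast Fin.CommRing

/-- In the generalized gadget `H k` (outer cycle `a`, inner cycle `b` on `3k+1` vertices,
with edges `a i — b i` and `b i — a (i+1)`), every proper coloring with colors in
`{1,2,3,4}` for which all bounded faces (all triangles and the inner face on the
`b`-vertices) have the unique-maximum property assigns color `4` to some outer
vertex `a i`. -/
theorem stmt_4 (k : ℕ) (hk : 1 ≤ k) (a b : Fin (3 * k + 1) → ℕ)
    (ha : ∀ i, 1 ≤ a i ∧ a i ≤ 4) (hb : ∀ i, 1 ≤ b i ∧ b i ≤ 4)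
    (paa : ∀ i, a i ≠ a (i + 1)) (pbb : ∀ i, b i ≠ b (i + 1))
    (pab : ∀ i, a i ≠ b i) (pba : ∀ i, b i ≠ a (i + 1))
    (tri1 : ∀ i, UM3 (a i) (b i) (a (i + 1)))
    (tri2 : ∀ i, UM3 (b i) (a (i + 1)) (b (i + 1)))
    (inner : (Finset.univ.filter fun i => ∀ j, b j ≤ b i).card = 1) :
    ∃ i, a i = 4 := by
  by_contra hcon
  push_neg at hcon
  have ha3 : ∀ i, 1 ≤ a i ∧ a i ≤ 3 := fun i => ⟨(ha i).1, by
    have h1 := (ha i).2; have h2 := hcon i; omega⟩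
  have hkey : ∀ i, b i = 4 ∨ a i + a (i + 1) + b i = 6 := by
    intro i
    have h1 := ha3 i; have h2 := ha3 (i + 1); have h3 := hb i
    have h4 := paa i; have h5 := pab i; have h6 := pba i
    omega
  have hstep : ∀ j, b j ≠ 4 → b (j + 1) ≠ 4 → a j ≠ a (j + 1 + 1) := by
    intro j h1 h2
    have k1 := hkey j; have k2 := hkey (j + 1)
    have k3 := pbb j
    omega
  have hjump : ∀ j, b j ≠ 4 → b (j + 1) ≠ 4 → b (j + 1 + 1) ≠ 4 →
      a (j + 1 + 1 + 1) = a j := by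
    intro j h1 h2 h3
    have s1 := hstep j h1 h2
    have s2 := hstep (j + 1) h2 h3
    have p1 := paa j; have p2 := paa (j + 1); have p3 := paa (j + 1 + 1)
    have q1 := ha3 j; have q2 := ha3 (j + 1); have q3 := ha3 (j + 1 + 1)
    have q4 := ha3 (j + 1 + 1 + 1)
    omega
  by_cases hb4 : ∃ i0, b i0 = 4
  · obtain ⟨i0, hi0⟩ := hb4
    have huniq : ∀ j, b j = 4 → j = i0 := by
      obtain ⟨x, hx⟩ := Finset.card_eq_one.mp inner
      have hmem : ∀ j, b j = 4 →
          j ∈ Finset.univ.filter fun i => ∀ j', b j' ≤ b i := by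
        intro j hj
        simp only [Finset.mem_filter, Finset.mem_univ, true_and]
        intro j'; rw [hj]; exact (hb j').2
      intro j hj
      have h1 := hmem j hj; have h2 := hmem i0 hi0
      rw [hx, Finset.mem_singleton] at h1 h2
      rw [h1, h2]
    have hne : ∀ m : ℕ, 1 ≤ m → m ≤ 3 * k →
        i0 + (m : Fin (3 * k + 1)) ≠ i0 := by
      intro m h1 h2 h
      have h0 : (m : Fin (3 * k + 1)) = 0 := by
        have := add_eq_left.mp h
        exact this
      have hdvd : (3 * k + 1) ∣ m := Fin.natCast_eq_zero.mp h0
      have := Nat.le_of_dvd (by omega) hdvd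
      omega
    have hb4' : ∀ m : ℕ, 1 ≤ m → m ≤ 3 * k →
        b (i0 + (m : Fin (3 * k + 1))) ≠ 4 := by
      intro m h1 h2 h
      exact hne m h1 h2 (huniq _ h)
    have main : ∀ s : ℕ, s ≤ k →
        a (i0 + ((1 + 3 * s : ℕ) : Fin (3 * k + 1))) = a (i0 + 1) := by
      intro s
      induction s with
      | zero => intro _; norm_num
      | succ s ih =>
        intro hs
        have c1 := hb4' (1 + 3 * s) (by omega) (by omega)
        have c2 := hb4' (2 + 3 * s) (by omega) (by omega)
        have c3 := hb4' (3 + 3 * s) (by omega) (by omega)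
        have e2 : i0 + ((2 + 3 * s : ℕ) : Fin (3 * k + 1)) =
            i0 + ((1 + 3 * s : ℕ) : Fin (3 * k + 1)) + 1 := by push_cast; ring
        have e3 : i0 + ((3 + 3 * s : ℕ) : Fin (3 * k + 1)) =
            i0 + ((1 + 3 * s : ℕ) : Fin (3 * k + 1)) + 1 + 1 := by push_cast; ring
        have e1 : i0 + ((1 + 3 * (s + 1) : ℕ) : Fin (3 * k + 1)) =
            i0 + ((1 + 3 * s : ℕ) : Fin (3 * k + 1)) + 1 + 1 + 1 := by push_cast; ring
        rw [e2] at c2; rw [e3] at c3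
        rw [e1, hjump _ c1 c2 c3]
        exact ih (by omega)
    have hfin := main k le_rfl
    have e : i0 + ((1 + 3 * k : ℕ) : Fin (3 * k + 1)) = i0 := by
      have h0 : ((1 + 3 * k : ℕ) : Fin (3 * k + 1)) = 0 := by
        rw [show 1 + 3 * k = 3 * k + 1 by ring]
        exact Fin.natCast_self _
      rw [h0, add_zero]
    rw [e] at hfin
    exact paa i0 hfin
  · push_neg at hb4
    have hj : ∀ j, a (j + 1 + 1 + 1) = a j := fun j =>
      hjump j (hb4 j) (hb4 _) (hb4 _)
    have main : ∀ s : ℕ, ∀ j, a (j + ((3 * s : ℕ) : Fin (3 * k + 1))) = a j := by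
      intro s
      induction s with
      | zero => intro j; norm_num
      | succ s ih =>
        intro j
        have e1 : j + ((3 * (s + 1) : ℕ) : Fin (3 * k + 1)) =
            j + ((3 * s : ℕ) : Fin (3 * k + 1)) + 1 + 1 + 1 := by push_cast; ring
        rw [e1, hj, ih]
    have hfin := main (2 * k + 1) (0 : Fin (3 * k + 1))
    have ec : ((3 * (2 * k + 1) : ℕ) : Fin (3 * k + 1)) = 1 := by
      have h1 : ((3 * k + 1 : ℕ) : Fin (3 * k + 1)) = 0 := Fin.natCast_self _
      rw [show 3 * (2 * k + 1) = (3 * k + 1) + ((3 * k + 1) + 1) by ring,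
        Nat.cast_add, h1, zero_add, Nat.cast_add, h1, zero_add, Nat.cast_one]
    rw [ec] at hfin
    exact paa 0 hfin.symm
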